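/- arXiv:2008.13428 — 2 statements merged into one kernel-verified Lean document; each statement's English description precedes it below -/
import Mathlib

section
/- Let S be an even positive integer and N_B, N_C positive integers. Suppose R ∈ ℝ^{(S·N_B)×(S·N_C)} is simultaneously block-circulant, R = Σ_{k=0}^{S−1} Ω_S^k ⊗ r_k with blocks r_k ∈ ℝ^{N_B×N_C}, and centrosymmetric, R·J_{S·N_C} = J_{S·N_B}·R. Then for all integers k with 0 ≤ k ≤ S/2, the blocks satisfy r_{S/2+k}·J_{N_C} = J_{N_B}·r_{S/2−k} (indices taken modulo S). -/
open Matrix Kronecker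

/-- The cyclic shift permutation matrix `Ω_n` with `(Ω_n)_{i,j} = 1` iff `j ≡ i+1 (mod n)`. -/
def cyclicShift (n : ℕ) : Matrix (Fin n) (Fin n) ℝ :=
  Matrix.of fun i j => if (j : ℕ) = ((i : ℕ) + 1) % n then 1 else 0

/-- The exchange matrix `J_n` with ones on the anti-diagonal and zeros elsewhere. -/
def exchMatrix (n : ℕ) : Matrix (Fin n) (Fin n) ℝ :=
  Matrix.of fun i j => if (i : ℕ) + (j : ℕ) = n - 1 then 1 else 0

lemma cyclicShift_pow (n : ℕ) (k : ℕ) (i j : Fin n) :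
    (cyclicShift n ^ k) i j = if (j : ℕ) = ((i : ℕ) + k) % n then 1 else 0 := by
  have hn : 0 < n := i.pos
  induction k generalizing j with
  | zero =>
    simp only [pow_zero, one_apply, Nat.add_zero, Nat.mod_eq_of_lt i.isLt]
    congr 1
    simp [Fin.ext_iff, eq_comm]
  | succ k ih =>
    rw [pow_succ, mul_apply]
    rw [Finset.sum_eq_single (⟨((i : ℕ) + k) % n, Nat.mod_lt _ hn⟩ : Fin n)]
    · rw [ih]
      simp only [cyclicShift, of_apply, if_pos rfl, one_mul, Nat.mod_mod_of_dvd]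
      rw [Nat.mod_add_mod, ← add_assoc]
      simp
    · intro m _ hm
      rw [ih, if_neg, zero_mul]
      intro h
      exact hm (Fin.ext h)
    · intro h; exact absurd (Finset.mem_univ _) h

lemma kron_exch_pick_right {p q : ℕ} (g : Fin p × Fin q → ℝ) (j : Fin p) (c : Fin q) :
    ∑ x : Fin p × Fin q, g x * (exchMatrix p ⊗ₖ exchMatrix q) x (j, c) =
      g (⟨p - 1 - (j : ℕ), by omega⟩, ⟨q - 1 - (c : ℕ), by omega⟩) := by
  have hj := j.isLt; have hc := c.isLt
  rw [Finset.sum_eq_single ((⟨p - 1 - (j : ℕ), by omega⟩, ⟨q - 1 - (c : ℕ), by omega⟩) :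
      Fin p × Fin q)]
  · simp only [kroneckerMap_apply, exchMatrix, of_apply]
    rw [if_pos (by omega), if_pos (by omega)]
    ring
  · intro x _ hx
    simp only [kroneckerMap_apply, exchMatrix, of_apply]
    have : ¬((x.1 : ℕ) + (j : ℕ) = p - 1) ∨ ¬((x.2 : ℕ) + (c : ℕ) = q - 1) := by
      by_contra h
      push_neg at h
      exact hx (Prod.ext (Fin.ext (show (x.1 : ℕ) = p - 1 - (j : ℕ) by omega))
        (Fin.ext (show (x.2 : ℕ) = q - 1 - (c : ℕ) by omega)))
    rcases this with h | h <;> rw [if_neg h] <;> ring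
  · intro h; exact absurd (Finset.mem_univ _) h

lemma kron_exch_pick_left {p q : ℕ} (g : Fin p × Fin q → ℝ) (i : Fin p) (b : Fin q) :
    ∑ x : Fin p × Fin q, (exchMatrix p ⊗ₖ exchMatrix q) (i, b) x * g x =
      g (⟨p - 1 - (i : ℕ), by omega⟩, ⟨q - 1 - (b : ℕ), by omega⟩) := by
  have hi := i.isLt; have hb := b.isLt
  rw [Finset.sum_eq_single ((⟨p - 1 - (i : ℕ), by omega⟩, ⟨q - 1 - (b : ℕ), by omega⟩) :
      Fin p × Fin q)]
  · simp only [kroneckerMap_apply, exchMatrix, of_apply]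
    rw [if_pos (by omega), if_pos (by omega)]
    ring
  · intro x _ hx
    simp only [kroneckerMap_apply, exchMatrix, of_apply]
    have : ¬((i : ℕ) + (x.1 : ℕ) = p - 1) ∨ ¬((b : ℕ) + (x.2 : ℕ) = q - 1) := by
      by_contra h
      push_neg at h
      exact hx (Prod.ext (Fin.ext (show (x.1 : ℕ) = p - 1 - (i : ℕ) by omega))
        (Fin.ext (show (x.2 : ℕ) = q - 1 - (b : ℕ) by omega)))
    rcases this with h | h <;> rw [if_neg h] <;> ring
  · intro h; exact absurd (Finset.mem_univ _) h

lemma exch_pick_right {q : ℕ} (g : Fin q → ℝ) (c : Fin q) :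
    ∑ x : Fin q, g x * exchMatrix q x c = g ⟨q - 1 - (c : ℕ), by omega⟩ := by
  have hc := c.isLt
  rw [Finset.sum_eq_single (⟨q - 1 - (c : ℕ), by omega⟩ : Fin q)]
  · simp only [exchMatrix, of_apply]; rw [if_pos (by omega)]; ring
  · intro x _ hx
    simp only [exchMatrix, of_apply]
    rw [if_neg (fun h => hx (Fin.ext (show (x : ℕ) = q - 1 - (c : ℕ) by omega)))]; ring
  · intro h; exact absurd (Finset.mem_univ _) h

lemma exch_pick_left {q : ℕ} (g : Fin q → ℝ) (b : Fin q) :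
    ∑ x : Fin q, exchMatrix q b x * g x = g ⟨q - 1 - (b : ℕ), by omega⟩ := by
  have hb := b.isLt
  rw [Finset.sum_eq_single (⟨q - 1 - (b : ℕ), by omega⟩ : Fin q)]
  · simp only [exchMatrix, of_apply]; rw [if_pos (by omega)]; ring
  · intro x _ hx
    simp only [exchMatrix, of_apply]
    rw [if_neg (fun h => hx (Fin.ext (show (x : ℕ) = q - 1 - (b : ℕ) by omega)))]; ring
  · intro h; exact absurd (Finset.mem_univ _) h

open Fin.NatCast

/-- If `R` is simultaneously block-circulant of order `S` (with blocks `r_k`, i.e.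
`R = Σ_k Ω_S^k ⊗ r_k`) and centrosymmetric (`R·J_{S·N_C} = J_{S·N_B}·R`), then for every
`0 ≤ k ≤ S/2` the blocks satisfy `r_{S/2+k}·J_{N_C} = J_{N_B}·r_{S/2−k}` (indices mod `S`). -/
theorem blocks_reflection_relation
    (S N_B N_C : ℕ) [NeZero S] (hSeven : Even S) (hNB : 0 < N_B) (hNC : 0 < N_C)
    (r : Fin S → Matrix (Fin N_B) (Fin N_C) ℝ)
    (R : Matrix (Fin S × Fin N_B) (Fin S × Fin N_C) ℝ)
    (hR : R = ∑ k : Fin S, (cyclicShift S ^ (k : ℕ)) ⊗ₖ r k)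
    (hcs : R * (exchMatrix S ⊗ₖ exchMatrix N_C) = (exchMatrix S ⊗ₖ exchMatrix N_B) * R) :
    ∀ k : ℕ, k ≤ S / 2 →
      r ((S / 2 + k : ℕ) : Fin S) * exchMatrix N_C =
        exchMatrix N_B * r ((S / 2 - k : ℕ) : Fin S) := by
  have hS : 0 < S := Nat.pos_of_ne_zero (NeZero.ne S)
  -- entry formula for R
  have Rentry : ∀ (i : Fin S) (b : Fin N_B) (j : Fin S) (c : Fin N_C),
      R (i, b) (j, c) = r ⟨((j : ℕ) + S - (i : ℕ)) % S, Nat.mod_lt _ hS⟩ b c := by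
    intro i b j c
    rw [hR]
    simp only [Matrix.sum_apply, kroneckerMap_apply, cyclicShift_pow]
    rw [Finset.sum_eq_single (⟨((j : ℕ) + S - (i : ℕ)) % S, Nat.mod_lt _ hS⟩ : Fin S)]
    · rw [if_pos, one_mul]
      have hi := i.isLt; have hj := j.isLt
      show (j : ℕ) = ((i : ℕ) + ((j : ℕ) + S - (i : ℕ)) % S) % S
      rw [Nat.add_mod_mod, show (i : ℕ) + ((j : ℕ) + S - (i : ℕ)) = (j : ℕ) + S by omega,
        Nat.add_mod_right, Nat.mod_eq_of_lt hj]
    · intro m _ hm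
      rw [if_neg, zero_mul]
      intro h
      apply hm; apply Fin.ext
      have hi := i.isLt; have hm2 := m.isLt
      show (m : ℕ) = ((j : ℕ) + S - (i : ℕ)) % S
      rw [h, show ((i : ℕ) + (m : ℕ)) % S + S - (i : ℕ) =
          ((i : ℕ) + (m : ℕ)) % S + (S - (i : ℕ)) by omega,
        Nat.mod_add_mod, show (i : ℕ) + (m : ℕ) + (S - (i : ℕ)) = (m : ℕ) + S by omega,
        Nat.add_mod_right, Nat.mod_eq_of_lt hm2]
    · intro h; exact absurd (Finset.mem_univ _) h
  have key : ∀ (j : Fin S) (b : Fin N_B) (c : Fin N_C),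
      r ⟨S - 1 - (j : ℕ), by omega⟩ b ⟨N_C - 1 - (c : ℕ), by omega⟩ =
      r ⟨((j : ℕ) + 1) % S, Nat.mod_lt _ hS⟩ ⟨N_B - 1 - (b : ℕ), by omega⟩ c := by
    intro j b c
    have hj := j.isLt
    have h := congrFun (congrFun hcs (⟨0, hS⟩, b)) (j, c)
    rw [mul_apply, mul_apply] at h
    rw [kron_exch_pick_right (fun x => R (⟨0, hS⟩, b) x) j c,
      kron_exch_pick_left (fun x => R x (j, c)) ⟨0, hS⟩ b] at h
    simp only at h
    rw [Rentry, Rentry] at h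
    have e1 : ((S - 1 - (j : ℕ)) + S - ((⟨0, hS⟩ : Fin S) : ℕ)) % S = S - 1 - (j : ℕ) := by
      show ((S - 1 - (j : ℕ)) + S - 0) % S = S - 1 - (j : ℕ)
      rw [Nat.sub_zero, Nat.add_mod_right, Nat.mod_eq_of_lt (by omega)]
    have e2 : ((j : ℕ) + S - ((⟨S - 1 - ((⟨0, hS⟩ : Fin S) : ℕ), by omega⟩ : Fin S) : ℕ)) % S
        = ((j : ℕ) + 1) % S := by
      show ((j : ℕ) + S - (S - 1 - 0)) % S = ((j : ℕ) + 1) % S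
      congr 1
      omega
    simp only [e1, e2] at h
    exact h
  intro k hk
  obtain ⟨t, ht⟩ := hSeven
  have ht2 : S / 2 = t := by omega
  have hm : (S / 2 + k) % S < S := Nat.mod_lt _ hS
  ext b c
  rw [mul_apply, mul_apply,
    exch_pick_right (fun c' => r ((S / 2 + k : ℕ) : Fin S) b c') c,
    exch_pick_left (fun b' => r ((S / 2 - k : ℕ) : Fin S) b' c) b]
  have hkey := key ⟨S - 1 - (S / 2 + k) % S, by omega⟩ b c
  have f1 : ((S / 2 + k : ℕ) : Fin S) =
      ⟨S - 1 - ((⟨S - 1 - (S / 2 + k) % S, by omega⟩ : Fin S) : ℕ), by omega⟩ := by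
    apply Fin.ext
    show ((S / 2 + k : ℕ) : Fin S).val = S - 1 - (S - 1 - (S / 2 + k) % S)
    rw [Fin.val_natCast]
    omega
  have f2 : ((S / 2 - k : ℕ) : Fin S) =
      ⟨(((⟨S - 1 - (S / 2 + k) % S, by omega⟩ : Fin S) : ℕ) + 1) % S, Nat.mod_lt _ hS⟩ := by
    apply Fin.ext
    show ((S / 2 - k : ℕ) : Fin S).val = ((S - 1 - (S / 2 + k) % S) + 1) % S
    rw [Fin.val_natCast, ht2]
    rcases eq_or_lt_of_le hk with hkt | hkt
    · have h1 : (t + k) % S = 0 := by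
        rw [hkt, ht2, show t + t = S from ht.symm, Nat.mod_self]
      rw [h1, hkt, ht2, show S - 1 - 0 + 1 = S by omega, Nat.mod_self,
        show t - t = 0 by omega, Nat.zero_mod]
    · rw [ht2] at hkt
      have h1 : (t + k) % S = t + k := Nat.mod_eq_of_lt (by omega)
      rw [h1, show S - 1 - (t + k) + 1 = t - k by omega,
        Nat.mod_eq_of_lt (show t - k < S by omega)]
  rw [← f1, ← f2] at hkey
  exact hkey
end

section
/- Let n, l, m be positive integers and let X = Σ_{k=0}^{n−1} Ω_n^k ⊗ x_k ∈ ℝ^{(n·l)×(n·m)} be block-circulant of order n with blocks x_k ∈ ℝ^{l×m}. Then X is centrosymmetric, i.e. J_{n·l} · X · J_{n·m} = X, if and only if its blocks satisfy x_{(n−k) mod n} = J_l · x_k · J_m for all k = 0, …, n−1; in particular this requires x_0 = J_l·x_0·J_m and, when n is even, x_{n/2} = J_l·x_{n/2}·J_m. -/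
open Matrix Kronecker
open Fin.NatCast

lemma exch_apply (n : ℕ) (i j : Fin n) :
    exchMatrix n i j = if j = i.rev then 1 else 0 := by
  have hi := i.isLt; have hj := j.isLt
  simp only [exchMatrix, Matrix.of_apply, Fin.ext_iff, Fin.val_rev]
  congr 1
  simp only [eq_iff_iff]; omega

lemma exch_apply' (n : ℕ) (i j : Fin n) :
    exchMatrix n i j = if i = j.rev then 1 else 0 := by
  have hi := i.isLt; have hj := j.isLt
  simp only [exchMatrix, Matrix.of_apply, Fin.ext_iff, Fin.val_rev]
  congr 1
  simp only [eq_iff_iff]; omega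

lemma cyclicShift_apply (n : ℕ) [NeZero n] (i j : Fin n) :
    cyclicShift n i j = if j = i + 1 then 1 else 0 := by
  have key : ((i : ℕ) + (1 : Fin n).val) % n = ((i : ℕ) + 1) % n := by
    conv_rhs => rw [Nat.add_mod]
    rw [Nat.mod_eq_of_lt i.isLt, Fin.val_one']
  simp only [cyclicShift, Matrix.of_apply, Fin.ext_iff, Fin.add_def, key]

lemma cyclicShift_pow_apply (n : ℕ) [NeZero n] (k : ℕ) (i j : Fin n) :
    (cyclicShift n ^ k) i j = if j = i + (k : Fin n) then 1 else 0 := by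
  induction k generalizing i j with
  | zero => simp [Matrix.one_apply, eq_comm]
  | succ k ih =>
    rw [pow_succ, Matrix.mul_apply]
    simp only [ih, cyclicShift_apply, ite_mul, one_mul, zero_mul]
    rw [Finset.sum_ite_eq' Finset.univ (i + (k : Fin n)) (fun t => if j = t + 1 then (1:ℝ) else 0)]
    simp [add_assoc]

lemma exch_mul_left (n : ℕ) {c : Type*} [Fintype c] [DecidableEq c]
    (Y : Matrix (Fin n) c ℝ) (i : Fin n) (j : c) :
    (exchMatrix n * Y) i j = Y i.rev j := by
  rw [Matrix.mul_apply]
  simp [exch_apply]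

lemma exch_mul_right (m : ℕ) {r : Type*} (Y : Matrix r (Fin m) ℝ) (i : r) (j : Fin m) :
    (Y * exchMatrix m) i j = Y i j.rev := by
  rw [Matrix.mul_apply]
  simp [exch_apply']

lemma kron_exch_apply (n l : ℕ) (p q : Fin n × Fin l) :
    (exchMatrix n ⊗ₖ exchMatrix l) p q =
      if q = (p.1.rev, p.2.rev) then 1 else 0 := by
  rw [Matrix.kroneckerMap_apply, exch_apply, exch_apply]
  simp [Prod.ext_iff, ite_and]
  aesop

lemma kron_exch_apply' (n l : ℕ) (p q : Fin n × Fin l) :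
    (exchMatrix n ⊗ₖ exchMatrix l) p q =
      if p = (q.1.rev, q.2.rev) then 1 else 0 := by
  rw [Matrix.kroneckerMap_apply, exch_apply', exch_apply']
  simp [Prod.ext_iff, ite_and]
  aesop

lemma kron_exch_mul_left (n l : ℕ) {c : Type*} (Y : Matrix (Fin n × Fin l) c ℝ)
    (p : Fin n × Fin l) (j : c) :
    ((exchMatrix n ⊗ₖ exchMatrix l) * Y) p j = Y (p.1.rev, p.2.rev) j := by
  rw [Matrix.mul_apply]
  simp only [kron_exch_apply, ite_mul, one_mul, zero_mul, Finset.sum_ite_eq',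
    Finset.mem_univ, if_true]

lemma kron_exch_mul_right (n m : ℕ) {r : Type*} (Y : Matrix r (Fin n × Fin m) ℝ)
    (i : r) (q : Fin n × Fin m) :
    (Y * (exchMatrix n ⊗ₖ exchMatrix m)) i q = Y i (q.1.rev, q.2.rev) := by
  rw [Matrix.mul_apply]
  simp only [kron_exch_apply', mul_ite, mul_one, mul_zero, Finset.sum_ite_eq',
    Finset.mem_univ, if_true]

lemma blockX_apply (n l m : ℕ) [NeZero n] (x : Fin n → Matrix (Fin l) (Fin m) ℝ)
    (i : Fin n) (a : Fin l) (j : Fin n) (b : Fin m) :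
    (∑ k : Fin n, (cyclicShift n ^ (k : ℕ)) ⊗ₖ x k) (i, a) (j, b) = x (j - i) a b := by
  rw [Matrix.sum_apply]
  have h : ∀ k : Fin n, ((cyclicShift n ^ (k : ℕ)) ⊗ₖ x k) (i, a) (j, b)
      = if k = j - i then x k a b else 0 := by
    intro k
    rw [Matrix.kroneckerMap_apply, cyclicShift_pow_apply, Fin.cast_val_eq_self]
    have : (j = i + k) ↔ (k = j - i) := by
      constructor
      · intro h; rw [h]; abel
      · intro h; rw [h]; abel
    simp only [this]
    split <;> simp
  simp only [h, Finset.sum_ite_eq', Finset.mem_univ, if_true]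

/-- **Characterization of block-circulant centrosymmetric matrices.** A block-circulant
matrix `X = Σ_k Ω_n^k ⊗ x_k` is centrosymmetric (`J_{nl}·X·J_{nm} = X`, with
`J_{nl} = J_n ⊗ J_l`) iff its blocks satisfy `x_{(n−k) mod n} = J_l·x_k·J_m` for all `k`
(here `-k` denotes negation in `Fin n`, i.e. `(n−k) mod n`). In particular this requires
`x_0 = J_l·x_0·J_m` and, when `n` is even, `x_{n/2} = J_l·x_{n/2}·J_m`. -/
theorem blockCirculant_centrosymmetric_iff
    (n l m : ℕ) [NeZero n] (hl : 0 < l) (hm : 0 < m)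
    (x : Fin n → Matrix (Fin l) (Fin m) ℝ)
    (X : Matrix (Fin n × Fin l) (Fin n × Fin m) ℝ)
    (hX : X = ∑ k : Fin n, (cyclicShift n ^ (k : ℕ)) ⊗ₖ x k) :
    ((exchMatrix n ⊗ₖ exchMatrix l) * X * (exchMatrix n ⊗ₖ exchMatrix m) = X ↔
      ∀ k : Fin n, x (-k) = exchMatrix l * x k * exchMatrix m) ∧
    ((exchMatrix n ⊗ₖ exchMatrix l) * X * (exchMatrix n ⊗ₖ exchMatrix m) = X →
      x 0 = exchMatrix l * x 0 * exchMatrix m ∧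
      (Even n → x ((n / 2 : ℕ) : Fin n) =
        exchMatrix l * x ((n / 2 : ℕ) : Fin n) * exchMatrix m)) := by
  have hsub : ∀ i j : Fin n, j.rev - i.rev = i - j := by
    intro i j
    rw [← Fin.rev_add, add_comm j i.rev, ← Fin.rev_sub, Fin.rev_rev]
  have hL : ∀ (i : Fin n) (a : Fin l) (j : Fin n) (b : Fin m),
      ((exchMatrix n ⊗ₖ exchMatrix l) * X * (exchMatrix n ⊗ₖ exchMatrix m)) (i, a) (j, b)
        = x (i - j) a.rev b.rev := by
    intro i a j b
    rw [kron_exch_mul_right, kron_exch_mul_left, hX]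
    simp only [blockX_apply, hsub]
  have hmain : (exchMatrix n ⊗ₖ exchMatrix l) * X * (exchMatrix n ⊗ₖ exchMatrix m) = X ↔
      ∀ k : Fin n, x (-k) = exchMatrix l * x k * exchMatrix m := by
    constructor
    · intro hc k
      ext a b
      have h : x ((0 : Fin n) - k) a.rev.rev b.rev.rev = X ((0 : Fin n), a.rev) (k, b.rev) := by
        rw [← hL]; exact congrFun (congrFun hc _) _
      rw [hX, blockX_apply, sub_zero, Fin.rev_rev, Fin.rev_rev, zero_sub] at h
      rw [exch_mul_right, exch_mul_left]
      exact h
    · intro hb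
      apply Matrix.ext
      rintro ⟨i, a⟩ ⟨j, b⟩
      rw [hL i a j b, hX, blockX_apply]
      have h := hb (j - i)
      rw [neg_sub] at h
      rw [h, exch_mul_right, exch_mul_left, Fin.rev_rev, Fin.rev_rev]
  refine ⟨hmain, fun hc => ?_⟩
  have hb := hmain.mp hc
  refine ⟨by have := hb 0; rwa [neg_zero] at this, fun he => ?_⟩
  have h2 : (-((n / 2 : ℕ) : Fin n)) = ((n / 2 : ℕ) : Fin n) := by
    have hadd : ((n / 2 : ℕ) : Fin n) + ((n / 2 : ℕ) : Fin n) = 0 := by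
      rw [← Nat.cast_add]
      obtain ⟨r, hr⟩ := he
      have hh : n / 2 + n / 2 = n := by omega
      rw [hh, Fin.natCast_self]
    exact neg_eq_of_add_eq_zero_right hadd
  have := hb (((n / 2 : ℕ) : Fin n))
  rwa [h2] at this
end
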